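/- Let m be a Weber node of a configuration. If a robot at node a (with λ(a) ≥ 1) moves to an adjacent node b with d(b,m) = d(a,m) - 1, then the set of Weber nodes of the new configuration is a subset of the set of Weber nodes of the original configuration; that is, no meeting node that was not a Weber node before the move can become one after the move. -/
import Mathlib


def mdist (a b : ℤ × ℤ) : ℕ := (a.1 - b.1).natAbs + (a.2 - b.2).natAbs

noncomputable def consistency (lam : (ℤ × ℤ) →₀ ℕ) (m : ℤ × ℤ) : ℕ :=
  lam.sum fun v k => mdist v m * k

/-- A Weber node: a meeting node minimizing the consistency over `M`. -/
def IsWeber (lam : (ℤ × ℤ) →₀ ℕ) (M : Finset (ℤ × ℤ)) (m : ℤ × ℤ) : Prop :=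
  m ∈ M ∧ ∀ m' ∈ M, consistency lam m ≤ consistency lam m'

lemma mdist_triangle (a b c : ℤ × ℤ) : mdist a c ≤ mdist a b + mdist b c := by
  simp only [mdist]; omega

lemma consistency_add (f g : (ℤ × ℤ) →₀ ℕ) (x : ℤ × ℤ) :
    consistency (f + g) x = consistency f x + consistency g x := by
  unfold consistency
  exact Finsupp.sum_add_index' (fun v => by simp) (fun v k₁ k₂ => mul_add _ _ _)

lemma consistency_single (a x : ℤ × ℤ) :
    consistency (Finsupp.single a 1) x = mdist a x := by
  unfold consistency
  rw [Finsupp.sum_single_index] <;> simp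

theorem stmt_1 (lam : (ℤ × ℤ) →₀ ℕ) (M : Finset (ℤ × ℤ)) (hM : M.Nonempty)
    (m a b : ℤ × ℤ) (hm : IsWeber lam M m)
    (ha : 1 ≤ lam a) (hab : mdist a b = 1) (hb : mdist b m + 1 = mdist a m) :
    ∀ m' : ℤ × ℤ,
      IsWeber (lam + Finsupp.single b 1 - Finsupp.single a 1) M m' →
        IsWeber lam M m' := by
  intro m' hm'
  set μ := lam + Finsupp.single b 1 - Finsupp.single a 1 with hμ
  have hle : Finsupp.single a 1 ≤ lam + Finsupp.single b 1 := by
    rw [Finsupp.le_def]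
    intro x
    by_cases hx : x = a
    · subst hx; simp [Finsupp.single_apply]; omega
    · simp [Finsupp.single_apply, Ne.symm hx]
  have hcancel : μ + Finsupp.single a 1 = lam + Finsupp.single b 1 :=
    tsub_add_cancel_of_le hle
  -- key equation
  have key : ∀ x, consistency μ x + mdist a x = consistency lam x + mdist b x := by
    intro x
    have := congrArg (fun f => consistency f x) hcancel
    simpa [consistency_add, consistency_single] using this
  have hmkey := key m
  have hcm : consistency μ m + 1 = consistency lam m := by omega
  have hlb : ∀ x, consistency lam x ≤ consistency μ x + 1 := by
    intro x
    have hk := key x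
    have ht : mdist a x ≤ 1 + mdist b x := by
      have := mdist_triangle a b x
      omega
    omega
  obtain ⟨hm'M, hm'min⟩ := hm'
  refine ⟨hm'M, fun m'' hm'' => ?_⟩
  have h1 : consistency μ m' ≤ consistency μ m := hm'min m hm.1
  have h2 : consistency lam m ≤ consistency lam m'' := hm.2 m'' hm''
  have h3 := hlb m'
  omega
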